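/- (Variance Lemma for the quantum eigenvector matrix, odd chain.) Let d ≥ 2 and k ≥ 1 be integers and set N = 2k+1. Let Q_1,…,Q_k, R_1,…,R_k be independent random matrices, each distributed according to the Haar probability measure on the real orthogonal group O(d²). Define the d^N × d^N matrices Q_A = (Q_1 ⊗ Q_2 ⊗ ⋯ ⊗ Q_k) ⊗ I_d and Q_B = I_d ⊗ (R_1 ⊗ R_2 ⊗ ⋯ ⊗ R_k), where ⊗ is the Kronecker product and I_d is the d×d identity, and set Q_q = Q_Aᵀ Q_B. Then every entry of Q_q has mean zero and variance d^{−N}: for all indices i, j, E[(Q_q)_{ij}] = 0 and E[((Q_q)_{ij})²] = d^{−N}. -/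

import Mathlib

open MeasureTheory Matrix

/-- The `d^N × d^N` matrix `Q_A = (Q_1 ⊗ ⋯ ⊗ Q_k) ⊗ I_d` (for `N = 2k+1`),
realized on the index set `Fin N → Fin d` of the `N`-fold tensor power basis:
the local matrix `Q i` acts on the pair of sites `(2i, 2i+1)` and the identity
acts on the last site `2k`. -/
noncomputable def kronOdd (d k : ℕ)
    (Q : Fin k → Matrix (Fin d × Fin d) (Fin d × Fin d) ℝ) :
    Matrix (Fin (2 * k + 1) → Fin d) (Fin (2 * k + 1) → Fin d) ℝ :=
  Matrix.of fun x y =>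
    (∏ i : Fin k,
      Q i (x ⟨2 * i, by have := i.isLt; omega⟩, x ⟨2 * i + 1, by have := i.isLt; omega⟩)
          (y ⟨2 * i, by have := i.isLt; omega⟩, y ⟨2 * i + 1, by have := i.isLt; omega⟩)) *
    (if x ⟨2 * k, by omega⟩ = y ⟨2 * k, by omega⟩ then (1 : ℝ) else 0)

/-- The `d^N × d^N` matrix `Q_B = I_d ⊗ (R_1 ⊗ ⋯ ⊗ R_k)` (for `N = 2k+1`):
the identity acts on site `0` and the local matrix `R i` acts on the pair of
sites `(2i+1, 2i+2)`. -/
noncomputable def kronEven (d k : ℕ)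
    (R : Fin k → Matrix (Fin d × Fin d) (Fin d × Fin d) ℝ) :
    Matrix (Fin (2 * k + 1) → Fin d) (Fin (2 * k + 1) → Fin d) ℝ :=
  Matrix.of fun x y =>
    (if x ⟨0, by omega⟩ = y ⟨0, by omega⟩ then (1 : ℝ) else 0) *
    ∏ i : Fin k,
      R i (x ⟨2 * i + 1, by have := i.isLt; omega⟩, x ⟨2 * i + 2, by have := i.isLt; omega⟩)
          (y ⟨2 * i + 1, by have := i.isLt; omega⟩, y ⟨2 * i + 2, by have := i.isLt; omega⟩)

section HaarAux
variable {n : Type*} [Fintype n] [DecidableEq n]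

lemma orth_col_sq {Q : n → n → ℝ} (h : (Matrix.of Q)ᵀ * Matrix.of Q = 1) (b : n) :
    ∑ c, Q c b * Q c b = 1 := by
  have := congrFun (congrFun h b) b
  simpa [Matrix.mul_apply, Matrix.one_apply] using this

lemma orth_entry_abs_le {Q : n → n → ℝ} (h : (Matrix.of Q)ᵀ * Matrix.of Q = 1) (a b : n) :
    |Q a b| ≤ 1 := by
  refine abs_le_one_iff_mul_self_le_one.2 ?_
  rw [← orth_col_sq h b]
  exact Finset.single_le_sum (fun c _ => mul_self_nonneg (Q c b)) (Finset.mem_univ a)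

lemma measurableSet_orth :
    MeasurableSet {Q : n → n → ℝ | (Matrix.of Q)ᵀ * Matrix.of Q = 1} := by
  have : {Q : n → n → ℝ | (Matrix.of Q)ᵀ * Matrix.of Q = 1} =
      ⋂ a, ⋂ b, {Q : n → n → ℝ | ∑ c, Q c a * Q c b = (1 : Matrix n n ℝ) a b} := by
    ext Q
    simp only [Set.mem_setOf_eq, Set.mem_iInter, ← Matrix.ext_iff]
    constructor
    · intro h a b; simpa [Matrix.mul_apply] using h a b
    · intro h a b; simpa [Matrix.mul_apply] using h a b
  rw [this]
  refine MeasurableSet.iInter fun a => MeasurableSet.iInter fun b => ?_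
  exact measurableSet_eq_fun
    (Finset.measurable_sum _ fun c _ =>
      Measurable.mul (f := fun Q : n → n → ℝ => Q c a) (g := fun Q => Q c b)
      ((measurable_pi_apply a).comp (measurable_pi_apply c))
      ((measurable_pi_apply b).comp (measurable_pi_apply c))) measurable_const

end HaarAux

section HaarMoments
variable {n : Type*} [Fintype n] [DecidableEq n]
  (μ0 : Measure (n → n → ℝ)) [IsProbabilityMeasure μ0]

lemma haar_ae_orth (hsupp : μ0 {Q | (Matrix.of Q)ᵀ * Matrix.of Q = 1} = 1) :
    ∀ᵐ Q ∂μ0, (Matrix.of Q)ᵀ * Matrix.of Q = 1 := by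
  rw [ae_iff]
  have : {Q : n → n → ℝ | ¬((Matrix.of Q)ᵀ * Matrix.of Q = 1)} =
      {Q : n → n → ℝ | (Matrix.of Q)ᵀ * Matrix.of Q = 1}ᶜ := rfl
  rw [this, prob_compl_eq_zero_iff measurableSet_orth]
  exact hsupp

lemma haar_integrable (hsupp : μ0 {Q | (Matrix.of Q)ᵀ * Matrix.of Q = 1} = 1)
    {f : (n → n → ℝ) → ℝ} (hf : Measurable f)
    (hb : ∀ Q, ((Matrix.of Q)ᵀ * Matrix.of Q = 1) → |f Q| ≤ 1) :
    Integrable f μ0 := by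
  refine ⟨hf.aestronglyMeasurable, HasFiniteIntegral.of_bounded (C := 1) ?_⟩
  filter_upwards [haar_ae_orth μ0 hsupp] with Q hQ
  simpa [Real.norm_eq_abs] using hb Q hQ

/-- transport integrals along the invariance. -/
lemma haar_inv_integral
    (hinv : ∀ P : Matrix n n ℝ, Pᵀ * P = 1 →
      μ0.map (fun Q => Matrix.of.symm (P * Matrix.of Q)) = μ0)
    (P : Matrix n n ℝ) (hP : Pᵀ * P = 1) {f : (n → n → ℝ) → ℝ} (hf : Measurable f) :
    ∫ Q, f Q ∂μ0 = ∫ Q, f (fun a b => ∑ c, P a c * Q c b) ∂μ0 := by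
  have hT : (fun Q : n → n → ℝ => Matrix.of.symm (P * Matrix.of Q)) =
      fun Q => (fun a b => ∑ c, P a c * Q c b) := by
    funext Q a b
    simp [Matrix.mul_apply]
  have hTm : Measurable fun Q : n → n → ℝ => (fun a b => ∑ c, P a c * Q c b) := by
    refine measurable_pi_lambda _ fun a => measurable_pi_lambda _ fun b => ?_
    exact Finset.measurable_sum _ fun c _ =>
      (measurable_const.mul ((measurable_pi_apply b).comp (measurable_pi_apply c)))
  conv_lhs => rw [← hinv P hP]
  rw [hT, integral_map hTm.aemeasurable hf.aestronglyMeasurable]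

lemma haar_mean_zero
    (hinv : ∀ P : Matrix n n ℝ, Pᵀ * P = 1 →
      μ0.map (fun Q => Matrix.of.symm (P * Matrix.of Q)) = μ0)
    (a b : n) : ∫ Q, Q a b ∂μ0 = 0 := by
  have hP : (-1 : Matrix n n ℝ)ᵀ * (-1) = 1 := by
    simp
  have hf : Measurable fun Q : n → n → ℝ => Q a b :=
    (measurable_pi_apply b).comp (measurable_pi_apply a)
  have h := haar_inv_integral μ0 hinv (-1) hP hf
  have h2 : (∫ Q, (fun a b => ∑ c, (-1 : Matrix n n ℝ) a c * Q c b) a b ∂μ0)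
      = - ∫ Q, Q a b ∂μ0 := by
    rw [← integral_neg]
    congr 1
    funext Q
    simp [Matrix.one_apply, Finset.sum_ite_eq, neg_apply]
  rw [h2] at h
  linarith

end HaarMoments

section HaarMoments2
variable {n : Type*} [Fintype n] [DecidableEq n]
  (μ0 : Measure (n → n → ℝ)) [IsProbabilityMeasure μ0]

lemma haar_meas_entry (a b : n) : Measurable fun Q : n → n → ℝ => Q a b :=
  (measurable_pi_apply b).comp (measurable_pi_apply a)

lemma haar_second_moment
    (hsupp : μ0 {Q | (Matrix.of Q)ᵀ * Matrix.of Q = 1} = 1)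
    (hinv : ∀ P : Matrix n n ℝ, Pᵀ * P = 1 →
      μ0.map (fun Q => Matrix.of.symm (P * Matrix.of Q)) = μ0)
    (a a' b : n) :
    ∫ Q, Q a b * Q a' b ∂μ0 = if a = a' then (Fintype.card n : ℝ)⁻¹ else 0 := by
  have hf : Measurable fun Q : n → n → ℝ => Q a b * Q a' b :=
    (haar_meas_entry a b).mul (haar_meas_entry a' b)
  by_cases h : a = a'
  · subst h
    simp only [if_pos rfl]
    -- all diagonal second moments are equal
    have hsq : ∀ a₂ : n, ∫ Q, Q a₂ b * Q a₂ b ∂μ0 = ∫ Q, Q a b * Q a b ∂μ0 := by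
      intro a₂
      set σ : Equiv.Perm n := Equiv.swap a a₂ with hσ
      set P : Matrix n n ℝ := Matrix.of fun c e => if σ c = e then (1:ℝ) else 0 with hPdef
      have hP : Pᵀ * P = 1 := by
        ext c c'
        rw [Matrix.mul_apply]
        simp only [Matrix.transpose_apply, Matrix.of_apply, hPdef]
        rw [← Equiv.sum_comp σ.symm
          (fun e => (if σ e = c then (1:ℝ) else 0) * (if σ e = c' then 1 else 0))]
        simp [Matrix.one_apply, Finset.sum_ite_eq, eq_comm]
      have h := haar_inv_integral μ0 hinv P hP (f := fun Q : n → n → ℝ => Q a b * Q a b)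
        ((haar_meas_entry a b).mul (haar_meas_entry a b))
      rw [h]
      congr 1
      funext Q
      show Q a₂ b * Q a₂ b = (∑ c, P a c * Q c b) * (∑ c, P a c * Q c b)
      have hrow : (∑ e, P a e * Q e b) = Q (σ a) b := by
        simp [hPdef, Finset.sum_ite_eq, eq_comm]
      rw [hrow, hσ, Equiv.swap_apply_left]
    have hint : ∀ a₂ : n, Integrable (fun Q : n → n → ℝ => Q a₂ b * Q a₂ b) μ0 := by
      intro a₂
      refine haar_integrable μ0 hsupp ((haar_meas_entry a₂ b).mul (haar_meas_entry a₂ b)) ?_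
      intro Q hQ
      rw [abs_mul]
      exact mul_le_one₀ (orth_entry_abs_le hQ a₂ b) (abs_nonneg _) (orth_entry_abs_le hQ a₂ b)
    have hcard : (0:ℝ) < Fintype.card n := by
      have : Nonempty n := ⟨a⟩
      exact_mod_cast Fintype.card_pos
    have key : (Fintype.card n : ℝ) * ∫ Q, Q a b * Q a b ∂μ0 = 1 := by
      calc (Fintype.card n : ℝ) * ∫ Q, Q a b * Q a b ∂μ0
          = ∑ a₂ : n, ∫ Q, Q a₂ b * Q a₂ b ∂μ0 := by
            rw [Finset.sum_congr rfl fun a₂ _ => hsq a₂, Finset.sum_const,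
              nsmul_eq_mul, Finset.card_univ]
        _ = ∫ Q, ∑ a₂ : n, Q a₂ b * Q a₂ b ∂μ0 := (integral_finset_sum _ fun a₂ _ => hint a₂).symm
        _ = ∫ _Q, (1:ℝ) ∂μ0 := by
            refine integral_congr_ae ?_
            filter_upwards [haar_ae_orth μ0 hsupp] with Q hQ
            exact orth_col_sq hQ b
        _ = 1 := by simp
    have hfin := eq_inv_of_mul_eq_one_right key
    simpa using hfin
  · simp only [if_neg h]
    set P : Matrix n n ℝ := Matrix.diagonal (fun c => if c = a then (-1:ℝ) else 1) with hPdef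
    have hP : Pᵀ * P = 1 := by
      rw [hPdef, Matrix.diagonal_transpose, Matrix.diagonal_mul_diagonal]
      have : (fun c => (if c = a then (-1:ℝ) else 1) * (if c = a then (-1:ℝ) else 1)) =
          fun _ => 1 := by
        funext c
        by_cases hc : c = a <;> simp [hc]
      rw [this, Matrix.diagonal_one]
    have hrule := haar_inv_integral μ0 hinv P hP hf
    have hrow : ∀ (Q : n → n → ℝ) (c : n), (∑ e, P c e * Q e b) =
        (if c = a then (-1:ℝ) else 1) * Q c b := by
      intro Q c
      rw [hPdef]
      simp [Matrix.diagonal_apply, Finset.sum_ite_eq, ite_mul]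
    have h2 : (∫ Q, (fun a' b' => ∑ c, P a' c * Q c b') a b *
        (fun a' b' => ∑ c, P a' c * Q c b') a' b ∂μ0) = - ∫ Q, Q a b * Q a' b ∂μ0 := by
      rw [← integral_neg]
      congr 1
      funext Q
      simp only []
      rw [hrow Q a, hrow Q a', if_pos rfl, if_neg (Ne.symm h)]
      ring
    rw [h2] at hrule
    linarith

end HaarMoments2

lemma two_point_prod {n d : ℕ} (a b : Fin n) (hab : a ≠ b) (g : Fin n → Fin d → ℝ)
    (hg : ∀ j, j ≠ a → j ≠ b → ∀ v, g j v = 1) (z : Fin n → Fin d) :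
    ∏ j, g j (z j) = g a (z a) * g b (z b) := by
  rw [← Finset.mul_prod_erase Finset.univ _ (Finset.mem_univ a),
    ← Finset.mul_prod_erase _ _ (Finset.mem_erase.2 ⟨Ne.symm hab, Finset.mem_univ b⟩)]
  have : ∏ j ∈ (Finset.univ.erase a).erase b, g j (z j) = 1 := by
    refine Finset.prod_eq_one fun j hj => ?_
    rw [Finset.mem_erase, Finset.mem_erase] at hj
    exact hg j hj.2.1 hj.1 _
  rw [this, mul_one]

lemma count_sum (d k : ℕ) (hd : 1 ≤ d) (hk : 1 ≤ k) (u v : Fin d) :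
    ∑ z : Fin (2*k+1) → Fin d,
      (if z ⟨2*k, by omega⟩ = u then (1:ℝ) else 0) * (if z ⟨0, by omega⟩ = v then 1 else 0)
      = (d:ℝ)^(2*k-1) := by
  set a : Fin (2*k+1) := ⟨2*k, by omega⟩ with ha
  set b : Fin (2*k+1) := ⟨0, by omega⟩ with hb
  have hab : a ≠ b := by
    simp only [ha, hb, Ne, Fin.mk.injEq]
    omega
  set g : Fin (2*k+1) → Fin d → ℝ := fun j v' =>
    if j = a then (if v' = u then 1 else 0) else if j = b then (if v' = v then 1 else 0) else 1
    with hg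
  have hg1 : ∀ j, j ≠ a → j ≠ b → ∀ v', g j v' = 1 := by
    intro j hja hjb v'; simp [hg, hja, hjb]
  have hstep : ∀ z : Fin (2*k+1) → Fin d,
      (if z a = u then (1:ℝ) else 0) * (if z b = v then 1 else 0) = ∏ j, g j (z j) := by
    intro z
    rw [two_point_prod a b hab g hg1 z]
    simp [hg, hab, Ne.symm hab]
  rw [Finset.sum_congr rfl fun z _ => hstep z, ← Fintype.prod_sum]
  have hsum : ∀ j, ∑ v' : Fin d, g j v' =
      if j = a then 1 else if j = b then 1 else (d:ℝ) := by
    intro j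
    by_cases hja : j = a
    · simp [hg, hja, Finset.sum_ite_eq']
    · by_cases hjb : j = b
      · simp [hg, hja, hjb, Finset.sum_ite_eq']
      · simp [hg, hja, hjb]
  rw [Finset.prod_congr rfl fun j _ => hsum j]
  rw [← Finset.mul_prod_erase Finset.univ _ (Finset.mem_univ a),
    ← Finset.mul_prod_erase _ _ (Finset.mem_erase.2 ⟨Ne.symm hab, Finset.mem_univ b⟩)]
  rw [if_pos rfl, if_neg (Ne.symm hab), if_pos rfl]
  have hrest : ∏ j ∈ (Finset.univ.erase a).erase b,
      (if j = a then (1:ℝ) else if j = b then 1 else (d:ℝ)) = (d:ℝ)^(2*k-1) := by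
    rw [Finset.prod_congr rfl (fun j hj => ?_), Finset.prod_const]
    · congr 1
      rw [Finset.card_erase_of_mem (Finset.mem_erase.2 ⟨Ne.symm hab, Finset.mem_univ b⟩),
        Finset.card_erase_of_mem (Finset.mem_univ a), Finset.card_univ, Fintype.card_fin]
      omega
    · rw [Finset.mem_erase, Finset.mem_erase] at hj
      rw [if_neg hj.2.1, if_neg hj.1]
  rw [hrest, one_mul, one_mul]

lemma qvar_collapse_eq (d k : ℕ) (hk : 1 ≤ k) (z w : Fin (2*k+1) → Fin d)
    (hQ : ∀ i : Fin k,
      ((z ⟨2*i, by have := i.isLt; omega⟩, z ⟨2*i+1, by have := i.isLt; omega⟩) :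
        Fin d × Fin d) = (w ⟨2*i, by have := i.isLt; omega⟩, w ⟨2*i+1, by have := i.isLt; omega⟩))
    (hR : ∀ i : Fin k,
      ((z ⟨2*i+1, by have := i.isLt; omega⟩, z ⟨2*i+2, by have := i.isLt; omega⟩) :
        Fin d × Fin d) = (w ⟨2*i+1, by have := i.isLt; omega⟩, w ⟨2*i+2, by have := i.isLt; omega⟩)) :
    z = w := by
  funext j
  by_cases hj : (j : ℕ) = 2*k
  · have i : Fin k := ⟨k-1, by omega⟩
    have h := congrArg Prod.snd (hR ⟨k-1, by omega⟩)
    simp only at h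
    have hje : j = ⟨2*(k-1)+2, by omega⟩ := by
      apply Fin.ext; simp only [hj]; omega
    rw [hje]
    exact h
  · have hlt : (j : ℕ) < 2*k := by have := j.isLt; omega
    by_cases hpar : (j : ℕ) % 2 = 0
    · have h := congrArg Prod.fst (hQ ⟨(j : ℕ)/2, by omega⟩)
      simp only at h
      have hje : j = ⟨2*((j : ℕ)/2), by omega⟩ := by
        apply Fin.ext; simp only []; omega
      rw [hje]
      exact h
    · have h := congrArg Prod.snd (hQ ⟨(j : ℕ)/2, by omega⟩)
      simp only at h
      have hje : j = ⟨2*((j : ℕ)/2)+1, by omega⟩ := by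
        apply Fin.ext; simp only []; omega
      rw [hje]
      exact h

lemma integral_pi_prod {E : Type*} [MeasurableSpace E] (μ0 : Measure E) [IsProbabilityMeasure μ0]
    {κ : Type*} [Fintype κ] (φ : κ → E → ℝ) :
    ∫ x : κ → E, ∏ i, φ i (x i) ∂(Measure.pi fun _ => μ0) = ∏ i, ∫ q, φ i q ∂μ0 := by
  letI : MeasureSpace E := ⟨μ0⟩
  have : Measure.pi (fun _ : κ => μ0) = (volume : Measure (κ → E)) := by
    rw [MeasureTheory.volume_pi]; rfl
  rw [this]
  exact MeasureTheory.integral_fintype_prod_eq_prod φ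

set_option maxHeartbeats 1000000 in
/-- **Variance Lemma for the quantum eigenvector matrix, odd
chain.** Let `N = 2k+1` and let `Q_1,…,Q_k, R_1,…,R_k` be independent
Haar-distributed matrices on the real orthogonal group `O(d²)` (here `μ0` is
the Haar probability measure on `d² × d²` real matrices, characterized as the
probability measure supported on the orthogonal matrices and invariant under
left multiplication by orthogonal matrices, and the joint law is the product
measure).  With `Q_A = (Q_1 ⊗ ⋯ ⊗ Q_k) ⊗ I_d`, `Q_B = I_d ⊗ (R_1 ⊗ ⋯ ⊗ R_k)`
and `Q_q = Q_Aᵀ Q_B`, every entry of `Q_q` has mean `0` and variance `d^{-N}`. -/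
theorem quantum_eigenvector_matrix_mean_variance (d k : ℕ) (hd : 2 ≤ d) (hk : 1 ≤ k)
    (μ0 : Measure ((Fin d × Fin d) → (Fin d × Fin d) → ℝ))
    [IsProbabilityMeasure μ0]
    (hsupp : μ0 {Q | (Matrix.of Q)ᵀ * Matrix.of Q = 1} = 1)
    (hinv : ∀ P : Matrix (Fin d × Fin d) (Fin d × Fin d) ℝ, Pᵀ * P = 1 →
      μ0.map (fun Q => Matrix.of.symm (P * Matrix.of Q)) = μ0)
    (x y : Fin (2 * k + 1) → Fin d) :
    (∫ ω : (Fin k → (Fin d × Fin d) → (Fin d × Fin d) → ℝ) ×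
           (Fin k → (Fin d × Fin d) → (Fin d × Fin d) → ℝ),
        ((kronOdd d k fun i => Matrix.of (ω.1 i))ᵀ *
          kronEven d k (fun i => Matrix.of (ω.2 i))) x y
        ∂((Measure.pi fun _ : Fin k => μ0).prod (Measure.pi fun _ : Fin k => μ0)) = 0) ∧
    (∫ ω : (Fin k → (Fin d × Fin d) → (Fin d × Fin d) → ℝ) ×
           (Fin k → (Fin d × Fin d) → (Fin d × Fin d) → ℝ),
        (((kronOdd d k fun i => Matrix.of (ω.1 i))ᵀ *
          kronEven d k (fun i => Matrix.of (ω.2 i))) x y) ^ 2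
        ∂((Measure.pi fun _ : Fin k => μ0).prod (Measure.pi fun _ : Fin k => μ0)) =
      ((d : ℝ) ^ (2 * k + 1))⁻¹) := by
  classical
  -- abbreviations
  set μp : Measure (Fin k → (Fin d × Fin d) → (Fin d × Fin d) → ℝ) :=
    Measure.pi fun _ : Fin k => μ0 with hμp
  set μΩ := μp.prod μp with hμΩ
  haveI : IsProbabilityMeasure μp := by rw [hμp]; infer_instance
  haveI : IsProbabilityMeasure μΩ := by rw [hμΩ]; infer_instance
  -- pair maps
  set zq : (Fin (2*k+1) → Fin d) → Fin k → Fin d × Fin d :=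
    fun z i => (z ⟨2*i, by have := i.isLt; omega⟩, z ⟨2*i+1, by have := i.isLt; omega⟩) with hzq
  set zr : (Fin (2*k+1) → Fin d) → Fin k → Fin d × Fin d :=
    fun z i => (z ⟨2*i+1, by have := i.isLt; omega⟩, z ⟨2*i+2, by have := i.isLt; omega⟩) with hzr
  set f : (Fin (2*k+1) → Fin d) → (Fin k → (Fin d × Fin d) → (Fin d × Fin d) → ℝ) → ℝ :=
    fun z Qs => (∏ i, Qs i (zq z i) (zq x i)) *
      (if z ⟨2*k, by omega⟩ = x ⟨2*k, by omega⟩ then 1 else 0) with hf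
  set g : (Fin (2*k+1) → Fin d) → (Fin k → (Fin d × Fin d) → (Fin d × Fin d) → ℝ) → ℝ :=
    fun z Rs => (if z ⟨0, by omega⟩ = y ⟨0, by omega⟩ then 1 else 0) *
      ∏ i, Rs i (zr z i) (zr y i) with hg
  -- entry formula
  have hentry : ∀ ω : (Fin k → (Fin d × Fin d) → (Fin d × Fin d) → ℝ) ×
      (Fin k → (Fin d × Fin d) → (Fin d × Fin d) → ℝ),
      ((kronOdd d k fun i => Matrix.of (ω.1 i))ᵀ *
        kronEven d k (fun i => Matrix.of (ω.2 i))) x y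
      = ∑ z : Fin (2*k+1) → Fin d, f z ω.1 * g z ω.2 := by
    intro ω
    rw [Matrix.mul_apply]
    refine Finset.sum_congr rfl fun z _ => ?_
    rfl
  -- measurability
  have measEntry : ∀ (i : Fin k) (p q : Fin d × Fin d),
      Measurable fun Qs : Fin k → (Fin d × Fin d) → (Fin d × Fin d) → ℝ => Qs i p q :=
    fun i p q => (measurable_pi_apply q).comp ((measurable_pi_apply p).comp (measurable_pi_apply i))
  have measf : ∀ z, Measurable (f z) := by
    intro z
    exact (Finset.measurable_prod Finset.univ fun i _ => measEntry i (zq z i) (zq x i)).mul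
      measurable_const
  have measg : ∀ z, Measurable (g z) := by
    intro z
    exact measurable_const.mul
      (Finset.measurable_prod Finset.univ fun i _ => measEntry i (zr z i) (zr y i))
  -- bounds
  have hind : ∀ (P : Prop) [Decidable P], |if P then (1:ℝ) else 0| ≤ 1 := by
    intro P hP
    by_cases h : P <;> simp [h]
  have boundf : ∀ z Qs, (∀ i, (Matrix.of (Qs i))ᵀ * Matrix.of (Qs i) = 1) → |f z Qs| ≤ 1 := by
    intro z Qs hQs
    rw [hf]
    simp only []
    rw [abs_mul]
    refine mul_le_one₀ ?_ (abs_nonneg _) (hind _)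
    rw [Finset.abs_prod]
    exact Finset.prod_le_one (fun i _ => abs_nonneg _)
      (fun i _ => orth_entry_abs_le (hQs i) _ _)
  have boundg : ∀ z Rs, (∀ i, (Matrix.of (Rs i))ᵀ * Matrix.of (Rs i) = 1) → |g z Rs| ≤ 1 := by
    intro z Rs hRs
    rw [hg]
    simp only []
    rw [abs_mul]
    refine mul_le_one₀ (hind _) ?_ ?_
    · exact abs_nonneg _
    rw [Finset.abs_prod]
    exact Finset.prod_le_one (fun i _ => abs_nonneg _)
      (fun i _ => orth_entry_abs_le (hRs i) _ _)
  -- a.e. orthogonality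
  have hae : ∀ᵐ ω : (Fin k → (Fin d × Fin d) → (Fin d × Fin d) → ℝ) ×
      (Fin k → (Fin d × Fin d) → (Fin d × Fin d) → ℝ) ∂μΩ,
      (∀ i, (Matrix.of (ω.1 i))ᵀ * Matrix.of (ω.1 i) = 1) ∧
      (∀ i, (Matrix.of (ω.2 i))ᵀ * Matrix.of (ω.2 i) = 1) := by
    set S : Set ((Fin d × Fin d) → (Fin d × Fin d) → ℝ) :=
      {Q | (Matrix.of Q)ᵀ * Matrix.of Q = 1} with hS
    have hSm : MeasurableSet S := measurableSet_orth
    set T := (Set.univ.pi fun _ : Fin k => S) ×ˢ (Set.univ.pi fun _ : Fin k => S) with hT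
    have hTm : MeasurableSet T :=
      (MeasurableSet.univ_pi fun _ => hSm).prod (MeasurableSet.univ_pi fun _ => hSm)
    have hT1 : μΩ T = 1 := by
      rw [hμΩ, hT, Measure.prod_prod, hμp, Measure.pi_pi]
      rw [hsupp]
      simp
    rw [ae_iff]
    have hcompl : {ω : (Fin k → (Fin d × Fin d) → (Fin d × Fin d) → ℝ) ×
        (Fin k → (Fin d × Fin d) → (Fin d × Fin d) → ℝ) |
        ¬((∀ i, (Matrix.of (ω.1 i))ᵀ * Matrix.of (ω.1 i) = 1) ∧
          (∀ i, (Matrix.of (ω.2 i))ᵀ * Matrix.of (ω.2 i) = 1))} = Tᶜ := by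
      ext ω
      simp [hT, hS, Set.mem_prod, Set.mem_univ_pi]
    rw [hcompl, prob_compl_eq_zero_iff hTm]
    exact hT1
  -- integrability
  have hInt2 : ∀ z w, Integrable (fun ω : (Fin k → (Fin d × Fin d) → (Fin d × Fin d) → ℝ) ×
      (Fin k → (Fin d × Fin d) → (Fin d × Fin d) → ℝ) =>
      (f z ω.1 * f w ω.1) * (g z ω.2 * g w ω.2)) μΩ := by
    intro z w
    refine ⟨(((((measf z).comp measurable_fst).mul ((measf w).comp measurable_fst)).mul
      (((measg z).comp measurable_snd).mul ((measg w).comp measurable_snd)))).aestronglyMeasurable,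
      HasFiniteIntegral.of_bounded (C := 1) ?_⟩
    filter_upwards [hae] with ω hω
    have h1 := boundf z ω.1 hω.1
    have h2 := boundg z ω.2 hω.2
    have h3 := boundf w ω.1 hω.1
    have h4 := boundg w ω.2 hω.2
    rw [Real.norm_eq_abs, abs_mul (f z ω.1 * f w ω.1) (g z ω.2 * g w ω.2),
      abs_mul (f z ω.1) (f w ω.1), abs_mul (g z ω.2) (g w ω.2)]
    refine mul_le_one₀ (mul_le_one₀ h1 (abs_nonneg _) h3) (by positivity)
      (mul_le_one₀ h2 (abs_nonneg _) h4)
  have hInt1 : ∀ z, Integrable (fun ω : (Fin k → (Fin d × Fin d) → (Fin d × Fin d) → ℝ) ×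
      (Fin k → (Fin d × Fin d) → (Fin d × Fin d) → ℝ) => f z ω.1 * g z ω.2) μΩ := by
    intro z
    refine ⟨(((measf z).comp measurable_fst).mul ((measg z).comp measurable_snd)).aestronglyMeasurable,
      HasFiniteIntegral.of_bounded (C := 1) ?_⟩
    filter_upwards [hae] with ω hω
    rw [Real.norm_eq_abs, abs_mul (f z ω.1) (g z ω.2)]
    exact mul_le_one₀ (boundf z ω.1 hω.1) (abs_nonneg _) (boundg z ω.2 hω.2)
  -- mean of f z is zero
  have hmeanf : ∀ z, (∫ Qs, f z Qs ∂μp) = 0 := by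
    intro z
    rw [hf]
    simp only []
    rw [integral_mul_const]
    have : (∫ Qs, ∏ i, Qs i (zq z i) (zq x i) ∂μp) = ∏ i : Fin k, ∫ Q, Q (zq z i) (zq x i) ∂μ0 := by
      rw [hμp]
      exact integral_pi_prod μ0 (fun i Q => Q (zq z i) (zq x i))
    rw [this, Finset.prod_eq_zero (Finset.mem_univ (⟨0, hk⟩ : Fin k))
      (haar_mean_zero μ0 hinv _ _), zero_mul]
  constructor
  · rw [integral_congr_ae (Filter.Eventually.of_forall hentry),
      integral_finset_sum _ (fun z _ => hInt1 z)]
    refine Finset.sum_eq_zero fun z _ => ?_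
    rw [integral_prod_mul (f z) (g z), hmeanf z, zero_mul]
  · -- second moment
    set c : ℝ := ((Fintype.card (Fin d × Fin d) : ℝ))⁻¹ with hc
    have hdm : (0:ℝ) < d := by exact_mod_cast (by omega : 0 < d)
    have hcval : c = (((d:ℝ))*d)⁻¹ := by
      rw [hc]
      norm_num [Fintype.card_prod, Fintype.card_fin]
    have hent2 : ∀ ω : (Fin k → (Fin d × Fin d) → (Fin d × Fin d) → ℝ) ×
        (Fin k → (Fin d × Fin d) → (Fin d × Fin d) → ℝ),
        (((kronOdd d k fun i => Matrix.of (ω.1 i))ᵀ *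
          kronEven d k (fun i => Matrix.of (ω.2 i))) x y) ^ 2
        = ∑ z : Fin (2*k+1) → Fin d, ∑ w : Fin (2*k+1) → Fin d,
            (f z ω.1 * f w ω.1) * (g z ω.2 * g w ω.2) := by
      intro ω
      rw [hentry ω, sq, Finset.sum_mul_sum]
      exact Finset.sum_congr rfl fun z _ => Finset.sum_congr rfl fun w _ =>
        mul_mul_mul_comm _ _ _ _
    rw [integral_congr_ae (Filter.Eventually.of_forall hent2),
      integral_finset_sum _ (fun z _ => integrable_finset_sum _ (fun w _ => hInt2 z w))]
    -- per-(z,w) integral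
    have hFF : ∀ z w : Fin (2*k+1) → Fin d, (∫ Qs, f z Qs * f w Qs ∂μp) =
        ((if z ⟨2*k, by omega⟩ = x ⟨2*k, by omega⟩ then (1:ℝ) else 0) *
         (if w ⟨2*k, by omega⟩ = x ⟨2*k, by omega⟩ then (1:ℝ) else 0)) *
        ∏ i : Fin k, (if zq z i = zq w i then c else 0) := by
      intro z w
      have hrw : (fun Qs : Fin k → (Fin d × Fin d) → (Fin d × Fin d) → ℝ =>
          f z Qs * f w Qs) = fun Qs =>
          ((if z ⟨2*k, by omega⟩ = x ⟨2*k, by omega⟩ then (1:ℝ) else 0) *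
           (if w ⟨2*k, by omega⟩ = x ⟨2*k, by omega⟩ then (1:ℝ) else 0)) *
          ∏ i : Fin k, (Qs i (zq z i) (zq x i) * Qs i (zq w i) (zq x i)) := by
        funext Qs
        rw [hf]
        simp only []
        rw [Finset.prod_mul_distrib]
        ring
      rw [hrw, integral_const_mul _, hμp,
        integral_pi_prod μ0 (fun i Q => Q (zq z i) (zq x i) * Q (zq w i) (zq x i))]
      congr 1
      refine Finset.prod_congr rfl fun i _ => ?_
      rw [haar_second_moment μ0 hsupp hinv, hc]
    have hGG : ∀ z w : Fin (2*k+1) → Fin d, (∫ Rs, g z Rs * g w Rs ∂μp) =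
        ((if z ⟨0, by omega⟩ = y ⟨0, by omega⟩ then (1:ℝ) else 0) *
         (if w ⟨0, by omega⟩ = y ⟨0, by omega⟩ then (1:ℝ) else 0)) *
        ∏ i : Fin k, (if zr z i = zr w i then c else 0) := by
      intro z w
      have hrw : (fun Rs : Fin k → (Fin d × Fin d) → (Fin d × Fin d) → ℝ =>
          g z Rs * g w Rs) = fun Rs =>
          ((if z ⟨0, by omega⟩ = y ⟨0, by omega⟩ then (1:ℝ) else 0) *
           (if w ⟨0, by omega⟩ = y ⟨0, by omega⟩ then (1:ℝ) else 0)) *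
          ∏ i : Fin k, (Rs i (zr z i) (zr y i) * Rs i (zr w i) (zr y i)) := by
        funext Rs
        rw [hg]
        simp only []
        rw [Finset.prod_mul_distrib]
        ring
      rw [hrw, integral_const_mul _, hμp,
        integral_pi_prod μ0 (fun i Q => Q (zr z i) (zr y i) * Q (zr w i) (zr y i))]
      congr 1
      refine Finset.prod_congr rfl fun i _ => ?_
      rw [haar_second_moment μ0 hsupp hinv, hc]
    -- inner sum collapses to w = z
    have hinner : ∀ z : Fin (2*k+1) → Fin d,
        (∑ w : Fin (2*k+1) → Fin d, ∫ ω, (f z ω.1 * f w ω.1) * (g z ω.2 * g w ω.2) ∂μΩ)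
        = ((if z ⟨2*k, by omega⟩ = x ⟨2*k, by omega⟩ then (1:ℝ) else 0) *
           (if z ⟨0, by omega⟩ = y ⟨0, by omega⟩ then (1:ℝ) else 0)) * (c^k * c^k) := by
      intro z
      have hterm : ∀ w, (∫ ω, (f z ω.1 * f w ω.1) * (g z ω.2 * g w ω.2) ∂μΩ) =
          (((if z ⟨2*k, by omega⟩ = x ⟨2*k, by omega⟩ then (1:ℝ) else 0) *
            (if w ⟨2*k, by omega⟩ = x ⟨2*k, by omega⟩ then (1:ℝ) else 0)) *
           ∏ i : Fin k, (if zq z i = zq w i then c else 0)) *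
          (((if z ⟨0, by omega⟩ = y ⟨0, by omega⟩ then (1:ℝ) else 0) *
            (if w ⟨0, by omega⟩ = y ⟨0, by omega⟩ then (1:ℝ) else 0)) *
           ∏ i : Fin k, (if zr z i = zr w i then c else 0)) := by
        intro w
        rw [hμΩ, integral_prod_mul (fun Qs => f z Qs * f w Qs) (fun Rs => g z Rs * g w Rs),
          hFF z w, hGG z w]
      rw [Finset.sum_congr rfl fun w _ => hterm w]
      rw [Finset.sum_eq_single_of_mem z (Finset.mem_univ z) ?side]
      · have h1 : ∏ i : Fin k, (if zq z i = zq z i then c else 0) = c^k := by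
          rw [Finset.prod_congr rfl (fun i _ => if_pos rfl), Finset.prod_const,
            Finset.card_univ, Fintype.card_fin]
        have h2 : ∏ i : Fin k, (if zr z i = zr z i then c else 0) = c^k := by
          rw [Finset.prod_congr rfl (fun i _ => if_pos rfl), Finset.prod_const,
            Finset.card_univ, Fintype.card_fin]
        rw [h1, h2]
        have hii : ∀ (P : Prop) (inst : Decidable P),
            (if P then (1:ℝ) else 0) * (if P then (1:ℝ) else 0) = if P then 1 else 0 := by
          intro P inst
          by_cases h : P <;> simp [h]
        rw [hii _ _, hii _ _]
        ring
      · intro w _ hwz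
        have : ¬((∀ i, zq z i = zq w i) ∧ (∀ i, zr z i = zr w i)) := by
          intro hcon
          exact hwz (qvar_collapse_eq d k hk z w (fun i => hcon.1 i) (fun i => hcon.2 i)).symm
        rw [not_and_or] at this
        rcases this with h | h
        · push_neg at h
          obtain ⟨i, hi⟩ := h
          rw [Finset.prod_eq_zero (f := fun j => if zq z j = zq w j then c else 0)
            (Finset.mem_univ i) (if_neg hi)]
          ring
        · push_neg at h
          obtain ⟨i, hi⟩ := h
          rw [Finset.prod_eq_zero (f := fun j => if zr z j = zr w j then c else 0)
            (Finset.mem_univ i) (if_neg hi)]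
          ring
    rw [Finset.sum_congr rfl fun z _ => integral_finset_sum _ (fun w _ => hInt2 z w)]
    rw [Finset.sum_congr rfl fun z _ => hinner z]
    have hsplit : ∑ z : Fin (2*k+1) → Fin d,
        ((if z ⟨2*k, by omega⟩ = x ⟨2*k, by omega⟩ then (1:ℝ) else 0) *
         (if z ⟨0, by omega⟩ = y ⟨0, by omega⟩ then (1:ℝ) else 0)) * (c^k * c^k)
        = (d:ℝ)^(2*k-1) * (c^k * c^k) := by
      rw [← Finset.sum_mul, count_sum d k (by omega) hk]
    rw [hsplit, hcval]
    have hdd : ((d:ℝ)*d)⁻¹ ^ k = ((d:ℝ)^(2*k))⁻¹ := by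
      rw [inv_pow]
      congr 1
      rw [show ((d:ℝ)*d) = (d:ℝ)^2 by ring, ← pow_mul]
    rw [hdd]
    have hd0 : (d:ℝ) ≠ 0 := ne_of_gt hdm
    rw [← mul_inv, ← pow_add]
    have hee : (2*k) + (2*k) = (2*k-1) + (2*k+1) := by omega
    rw [hee, pow_add, mul_inv, ← mul_assoc, mul_inv_cancel₀ (pow_ne_zero _ hd0), one_mul]
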